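/- Two coupled discrete Snell-type recursions yield the game value: let Ŷ^0, Ŷ^1 satisfy Ŷ^i_M = Γ_i and Ŷ^i_m = max( E[Ŷ^i_{m+1}|F_m], −γ_{i,1−i}(m) + E[Ŷ^{1−i}_{m+1}|F_m] ) with γ_{0,1} = γ₋, γ_{1,0} = γ₊, γ₋ + γ₊ > 0 a.s. Then the process Ŷ^1_m − Ŷ^0_m equals the process V̂_m defined by V̂_M = Γ₁ − Γ₀ and V̂_m = min( γ₋(m), max( −γ₊(m), E[V̂_{m+1}|F_m] ) ), almost surely for each m, provided −γ₊(M) ≤ Γ₁ − Γ₀ ≤ γ₋(M) a.s. -/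

import Mathlib

open MeasureTheory

lemma key_arith (a b gm gp : ℝ) (h : 0 < gm + gp) :
    max b (-gp + a) - max a (-gm + b) = min gm (max (-gp) (b - a)) := by
  simp only [max_def, min_def]
  split_ifs <;> linarith

/-- The difference of the two coupled Snell-type switching recursions equals
the Dynkin game value recursion. -/
theorem switching_difference_eq_game_value {Ω : Type*} {m0 : MeasurableSpace Ω}
    (μ : Measure Ω) [IsProbabilityMeasure μ] (ℱ : Filtration ℕ m0) (M : ℕ)
    (γminus γplus : ℕ → Ω → ℝ) (Y0 Y1 V : ℕ → Ω → ℝ) (Γ0 Γ1 : Ω → ℝ)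
    (hΓ0 : Integrable Γ0 μ) (hΓ1 : Integrable Γ1 μ)
    (hΓ0meas : StronglyMeasurable[ℱ M] Γ0) (hΓ1meas : StronglyMeasurable[ℱ M] Γ1)
    (hint0 : ∀ m, Integrable (Y0 m) μ) (hint1 : ∀ m, Integrable (Y1 m) μ)
    (hVint : ∀ m, Integrable (V m) μ)
    (hpos : ∀ m, ∀ᵐ ω ∂μ, 0 < γminus m ω + γplus m ω)
    (hΓ : ∀ᵐ ω ∂μ, -γplus M ω ≤ Γ1 ω - Γ0 ω ∧ Γ1 ω - Γ0 ω ≤ γminus M ω)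
    (hterm0 : Y0 M = Γ0) (hterm1 : Y1 M = Γ1)
    (hrec0 : ∀ m < M, ∀ᵐ ω ∂μ,
      Y0 m ω = max ((μ[Y0 (m + 1)|ℱ m]) ω) (-γminus m ω + (μ[Y1 (m + 1)|ℱ m]) ω))
    (hrec1 : ∀ m < M, ∀ᵐ ω ∂μ,
      Y1 m ω = max ((μ[Y1 (m + 1)|ℱ m]) ω) (-γplus m ω + (μ[Y0 (m + 1)|ℱ m]) ω))
    (hVterm : ∀ ω, V M ω = Γ1 ω - Γ0 ω)
    (hVrec : ∀ m < M, ∀ᵐ ω ∂μ,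
      V m ω = min (γminus m ω) (max (-γplus m ω) ((μ[V (m + 1)|ℱ m]) ω))) :
    ∀ m ≤ M, ∀ᵐ ω ∂μ, Y1 m ω - Y0 m ω = V m ω := by
  have base : ∀ᵐ ω ∂μ, Y1 M ω - Y0 M ω = V M ω := by
    filter_upwards with ω
    rw [hterm0, hterm1, hVterm]
  have step : ∀ m < M, (∀ᵐ ω ∂μ, Y1 (m + 1) ω - Y0 (m + 1) ω = V (m + 1) ω) →
      ∀ᵐ ω ∂μ, Y1 m ω - Y0 m ω = V m ω := by
    intro m hm hIH
    have hIH' : Y1 (m + 1) - Y0 (m + 1) =ᵐ[μ] V (m + 1) := by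
      filter_upwards [hIH] with ω h using h
    have hc : μ[Y1 (m + 1) - Y0 (m + 1)|ℱ m] =ᵐ[μ] μ[V (m + 1)|ℱ m] :=
      condExp_congr_ae hIH'
    have hs : μ[Y1 (m + 1) - Y0 (m + 1)|ℱ m]
        =ᵐ[μ] μ[Y1 (m + 1)|ℱ m] - μ[Y0 (m + 1)|ℱ m] :=
      condExp_sub (hint1 _) (hint0 _) _
    filter_upwards [hrec0 m hm, hrec1 m hm, hVrec m hm, hpos m, hc, hs]
      with ω e0 e1 eV hp hcω hsω
    rw [e0, e1, eV, ← hcω, hsω]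
    simp only [Pi.sub_apply]
    exact key_arith _ _ _ _ hp
  have aux : ∀ k, ∀ᵐ ω ∂μ, Y1 (M - k) ω - Y0 (M - k) ω = V (M - k) ω := by
    intro k
    induction k with
    | zero => simpa using base
    | succ k ih =>
      rcases le_or_gt M k with hk | hk
      · have h : M - (k + 1) = M - k := by omega
        rw [h]; exact ih
      · have h1 : M - (k + 1) + 1 = M - k := by omega
        have hlt : M - (k + 1) < M := by omega
        apply step _ hlt
        rw [h1]; exact ih
  intro m hm
  have h : m = M - (M - m) := by omega
  rw [h]
  exact aux (M - m)
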